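/- Let A be a commutative k-algebra and d ≥ 1. For a k-linear u: A → A extended to u(a) = a + u₁(a)t on A[t]/(t²): if u satisfies the d-sphere product condition (for d odd: u(a₁a₂)⋯u(a_d a_{d+1}) = u(a₁)u(a₂a₃)⋯u(a_{d−1}a_d)u(a_{d+1}); for d even: u(a₁a₂)⋯u(a_{d−1}a_d)u(a_{d+1}) = u(a₁)u(a₂a₃)⋯u(a_d a_{d+1})) modulo t², then u₁ satisfies δ_d(u₁) = 0, where δ_d(f)(a₁⊗⋯⊗a_{d+1}) = a₁⋯a_d f(a_{d+1}) + Σ_{i=1}^{d} (−1)^i a₁⋯a_{d−i} f(a_{d+1−i}a_{d+2−i}) a_{d+3−i}⋯a_{d+1} + (−1)^{d+1} f(a₁)a₂⋯a_{d+1}. -/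

import Mathlib

open Finset

section Aux
open Polynomial
variable {A : Type*} [CommRing A]

lemma coeff1_mul (p q : A[X]) : (p*q).coeff 1 = p.coeff 0 * q.coeff 1 + p.coeff 1 * q.coeff 0 := by
  rw [Polynomial.coeff_mul]
  rw [show (Finset.HasAntidiagonal.antidiagonal 1 : Finset (ℕ × ℕ)) = {(0,1),(1,0)} from rfl]
  simp

lemma coeff0_prod (s : Finset ℕ) (f : ℕ → A[X]) :
    (∏ i ∈ s, f i).coeff 0 = ∏ i ∈ s, (f i).coeff 0 := by
  simp [Polynomial.coeff_zero_eq_eval_zero, Polynomial.eval_prod]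

lemma coeff1_prod (n : ℕ) (b c : ℕ → A) :
    (∏ i ∈ range n, (C (b i) + C (c i) * X)).coeff 1
      = ∑ m ∈ range n, (∏ j ∈ range m, b j) * c m * ∏ j ∈ Ico (m+1) n, b j := by
  induction n with
  | zero => simp [Polynomial.coeff_one]
  | succ n ih =>
    rw [Finset.prod_range_succ, coeff1_mul, coeff0_prod, Finset.sum_range_succ]
    simp only [ih]
    have h0 : ∀ i, ((C (b i) + C (c i) * X) : A[X]).coeff 0 = b i := by intro i; simp
    have h1 : ((C (b n) + C (c n) * X) : A[X]).coeff 1 = c n := by simp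
    simp only [h0, h1]
    rw [Finset.Ico_self, Finset.prod_empty, mul_one, Finset.sum_mul, add_comm]
    congr 1
    apply Finset.sum_congr rfl
    intro m hm
    rw [Finset.prod_Ico_succ_top (by simp at hm; omega)]
    ring

lemma pair_prod (a : ℕ → A) (s t : ℕ) :
    ∏ j ∈ Ico s t, (a (2*j+1) * a (2*j+2)) = ∏ m ∈ Icc (2*s+1) (2*t), a m := by
  induction t with
  | zero => rw [Finset.Ico_eq_empty (by omega), Finset.Icc_eq_empty (by omega)]; simp
  | succ t ih =>
    rcases le_or_gt (t+1) s with h | h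
    · rw [Finset.Ico_eq_empty (by omega), Finset.Icc_eq_empty (by omega)]; simp
    · rw [Finset.prod_Ico_succ_top (by omega), ih,
        show 2*(t+1) = (2*t+1)+1 by ring, Finset.prod_Icc_succ_top (by omega),
        Finset.prod_Icc_succ_top (by omega),
        show 2*t+1+1 = 2*t+2 by omega]
      ring

lemma prod_shift (a : ℕ → A) (p q : ℕ) :
    ∏ m ∈ Icc p q, a (m+1) = ∏ m ∈ Icc (p+1) (q+1), a m := by
  rw [← Finset.map_add_right_Icc, Finset.prod_map]; rfl

lemma range_shift (a : ℕ → A) (n : ℕ) : ∏ j ∈ range n, a (j+1) = ∏ j ∈ Icc 1 n, a j := by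
  rw [← Finset.Ico_add_one_right_eq_Icc, Finset.prod_Ico_eq_prod_range]
  simp [add_comm]

lemma pair_prod' (a : ℕ → A) (s t : ℕ) :
    ∏ j ∈ Ico s t, (a (2*j+2) * a (2*j+3)) = ∏ m ∈ Icc (2*s+2) (2*t+1), a m := by
  have h := pair_prod (fun m => a (m+1)) s t
  rw [prod_shift] at h
  exact h

lemma prod_Icc_bot (a : ℕ → A) (p q : ℕ) (h : p ≤ q) :
    a p * ∏ m ∈ Icc (p+1) q, a m = ∏ m ∈ Icc p q, a m := by
  have hins : Icc p q = insert p (Icc (p+1) q) := by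
    ext x; simp only [Finset.mem_insert, Finset.mem_Icc]; omega
  rw [hins, Finset.prod_insert (by simp)]

end Aux

/-- If `u(a) = a + u₁(a)t` satisfies the `d`-sphere product condition mod `t²`,
then `δ_d(u₁) = 0`. -/
theorem stmt3 {k A : Type*} [Field k] [CommRing A] [Algebra k A]
    (d : ℕ) (hd : 1 ≤ d) (u₁ : A →ₗ[k] A) (u : A → Polynomial A)
    (hu : ∀ a : A, u a = Polynomial.C a + Polynomial.C (u₁ a) * Polynomial.X)
    (hodd : Odd d → ∀ a : ℕ → A,
        (∏ i ∈ range ((d + 1) / 2), u (a (2 * i + 1) * a (2 * i + 2)))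
          - u (a 1) * (∏ i ∈ range ((d - 1) / 2), u (a (2 * i + 2) * a (2 * i + 3)))
              * u (a (d + 1))
          ∈ Ideal.span {(Polynomial.X : Polynomial A) ^ 2})
    (heven : Even d → ∀ a : ℕ → A,
        (∏ i ∈ range (d / 2), u (a (2 * i + 1) * a (2 * i + 2))) * u (a (d + 1))
          - u (a 1) * (∏ i ∈ range (d / 2), u (a (2 * i + 2) * a (2 * i + 3)))
          ∈ Ideal.span {(Polynomial.X : Polynomial A) ^ 2}) :
    ∀ a : ℕ → A,
      (∏ j ∈ range d, a (j + 1)) * u₁ (a (d + 1))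
        + (∑ i ∈ Finset.Icc 1 d, (-1 : A) ^ i *
            ((∏ j ∈ range (d - i), a (j + 1)) * u₁ (a (d + 1 - i) * a (d + 2 - i))
              * ∏ j ∈ Finset.Icc (d + 3 - i) (d + 1), a j))
        + (-1 : A) ^ (d + 1) * (u₁ (a 1) * ∏ j ∈ Finset.Icc 2 (d + 1), a j) = 0 := by
  intro a
  have hc0 : ∀ x : A, (u x).coeff 0 = x := fun x => by rw [hu]; simp
  have hc1 : ∀ x : A, (u x).coeff 1 = u₁ x := fun x => by rw [hu]; simp
  have hz : ∀ p : Polynomial A, p ∈ Ideal.span {(Polynomial.X : Polynomial A)^2} →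
      p.coeff 1 = 0 := by
    intro p hp
    rw [Ideal.mem_span_singleton] at hp
    obtain ⟨q, rfl⟩ := hp
    rw [mul_comm, Polynomial.coeff_mul_X_pow']
    simp
  set P : ℕ → A := fun m =>
    (∏ j ∈ Icc 1 (m-1), a j) * u₁ (a m * a (m+1)) * ∏ j ∈ Icc (m+2) (d+1), a j with hP
  have hS : (∑ i ∈ Finset.Icc 1 d, (-1 : A) ^ i *
        ((∏ j ∈ range (d - i), a (j + 1)) * u₁ (a (d + 1 - i) * a (d + 2 - i))
          * ∏ j ∈ Finset.Icc (d + 3 - i) (d + 1), a j))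
      = ∑ m ∈ Icc 1 d, (-1:A)^(d+1-m) * P m := by
    apply Finset.sum_nbij' (fun i => d+1-i) (fun m => d+1-m)
    · intro i hi; simp only [Finset.mem_Icc] at hi ⊢; omega
    · intro m hm; simp only [Finset.mem_Icc] at hm ⊢; omega
    · intro i hi; simp only [Finset.mem_Icc] at hi; omega
    · intro m hm; simp only [Finset.mem_Icc] at hm; omega
    · intro i hi
      simp only [Finset.mem_Icc] at hi
      rw [range_shift]
      have e1 : d+1-(d+1-i) = i := by omega
      have e2 : (d+1-i)-1 = d-i := by omega
      have e3 : (d+1-i)+1 = d+2-i := by omega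
      have e4 : (d+1-i)+2 = d+3-i := by omega
      simp only [hP, e1, e2, e3, e4]
  rw [range_shift a d, hS,
    ← Finset.sum_filter_add_sum_filter_not (Icc 1 d) (fun m => m % 2 = 1)]
  rcases Nat.even_or_odd d with hde | hdo
  · -- d even
    obtain ⟨r, hr⟩ := hde
    have hd2 : d % 2 = 0 := by omega
    have hn : d/2 = r := by omega
    have hkey := hz _ (heven ⟨r, hr⟩ a)
    rw [Polynomial.coeff_sub, sub_eq_zero] at hkey
    have hPL : (∏ i ∈ range (d/2), u (a (2*i+1) * a (2*i+2))).coeff 0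
        = ∏ j ∈ Icc 1 d, a j := by
      rw [hn, coeff0_prod]
      simp only [hc0]
      rw [Finset.range_eq_Ico, pair_prod a 0 r]
      norm_num [show 2*r = d by omega]
    have hPL1 : (∏ i ∈ range (d/2), u (a (2*i+1) * a (2*i+2))).coeff 1
        = ∑ j ∈ range r, (∏ m ∈ Icc 1 (2*j), a m) * u₁ (a (2*j+1) * a (2*j+2))
            * ∏ m ∈ Icc (2*j+3) d, a m := by
      rw [hn]
      simp only [hu]
      rw [coeff1_prod]
      apply Finset.sum_congr rfl
      intro m hm
      simp only [Finset.mem_range] at hm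
      rw [Finset.range_eq_Ico, pair_prod a 0 m, pair_prod a (m+1) r]
      norm_num [show 2*r = d by omega, show 2*(m+1)+1 = 2*m+3 by ring]
    have hL : ((∏ i ∈ range (d/2), u (a (2*i+1) * a (2*i+2))) * u (a (d+1))).coeff 1
        = ∑ j ∈ range r, P (2*j+1) + (∏ j ∈ Icc 1 d, a j) * u₁ (a (d+1)) := by
      rw [coeff1_mul, hc0, hc1, hPL, hPL1, Finset.sum_mul]
      rw [add_comm]
      congr 1
      apply Finset.sum_congr rfl
      intro m hm
      simp only [Finset.mem_range] at hm
      simp only [hP]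
      have e1 : 2*m+1-1 = 2*m := by omega
      have e2 : 2*m+1+1 = 2*m+2 := by omega
      have e3 : 2*m+1+2 = 2*m+3 := by omega
      simp only [e1, e2, e3]
      rw [Finset.prod_Icc_succ_top (show 2*m+3 ≤ d+1 by omega) a]
      ring
    have hQ0 : (∏ i ∈ range (d/2), u (a (2*i+2) * a (2*i+3))).coeff 0
        = ∏ j ∈ Icc 2 (d+1), a j := by
      rw [hn, coeff0_prod]
      simp only [hc0]
      rw [Finset.range_eq_Ico, pair_prod' a 0 r]
      norm_num [show 2*r+1 = d+1 by omega]
    have hQ1 : (∏ i ∈ range (d/2), u (a (2*i+2) * a (2*i+3))).coeff 1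
        = ∑ j ∈ range r, (∏ m ∈ Icc 2 (2*j+1), a m) * u₁ (a (2*j+2) * a (2*j+3))
            * ∏ m ∈ Icc (2*j+4) (d+1), a m := by
      rw [hn]
      simp only [hu]
      rw [coeff1_prod]
      apply Finset.sum_congr rfl
      intro m hm
      simp only [Finset.mem_range] at hm
      rw [Finset.range_eq_Ico, pair_prod' a 0 m, pair_prod' a (m+1) r]
      norm_num [show 2*r+1 = d+1 by omega, show 2*(m+1)+2 = 2*m+4 by ring]
    have hR : (u (a 1) * ∏ i ∈ range (d/2), u (a (2*i+2) * a (2*i+3))).coeff 1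
        = u₁ (a 1) * ∏ j ∈ Icc 2 (d+1), a j + ∑ j ∈ range r, P (2*j+2) := by
      rw [coeff1_mul, hc0, hc1, hQ0, hQ1, Finset.mul_sum]
      rw [add_comm]
      congr 1
      apply Finset.sum_congr rfl
      intro m hm
      simp only [Finset.mem_range] at hm
      simp only [hP]
      have e1 : 2*m+2-1 = 2*m+1 := by omega
      have e2 : 2*m+2+1 = 2*m+3 := by omega
      have e3 : 2*m+2+2 = 2*m+4 := by omega
      simp only [e1, e2, e3]
      rw [← prod_Icc_bot a 1 (2*m+1) (by omega)]
      ring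
    rw [hL, hR] at hkey
    have hOdds : ∑ m ∈ (Icc 1 d).filter (fun m => m % 2 = 1), (-1:A)^(d+1-m) * P m
        = ∑ j ∈ range r, P (2*j+1) := by
      apply Finset.sum_nbij' (fun m => m / 2) (fun j => 2*j+1)
      · intro m hm; simp only [Finset.mem_filter, Finset.mem_Icc, Finset.mem_range] at hm ⊢; omega
      · intro j hj; simp only [Finset.mem_filter, Finset.mem_Icc, Finset.mem_range] at hj ⊢; omega
      · intro m hm; simp only [Finset.mem_filter, Finset.mem_Icc] at hm; omega
      · intro j hj; simp only [Finset.mem_range] at hj; omega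
      · intro m hm
        simp only [Finset.mem_filter, Finset.mem_Icc] at hm
        rw [show 2*(m/2)+1 = m by omega]
        rw [Even.neg_one_pow (by rw [Nat.even_iff]; omega), one_mul]
    have hEvens : ∑ m ∈ (Icc 1 d).filter (fun m => ¬ (m % 2 = 1)), (-1:A)^(d+1-m) * P m
        = -∑ j ∈ range r, P (2*j+2) := by
      rw [← Finset.sum_neg_distrib]
      apply Finset.sum_nbij' (fun m => m / 2 - 1) (fun j => 2*j+2)
      · intro m hm; simp only [Finset.mem_filter, Finset.mem_Icc, Finset.mem_range] at hm ⊢; omega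
      · intro j hj; simp only [Finset.mem_filter, Finset.mem_Icc, Finset.mem_range] at hj ⊢; omega
      · intro m hm; simp only [Finset.mem_filter, Finset.mem_Icc] at hm; omega
      · intro j hj; simp only [Finset.mem_range] at hj; omega
      · intro m hm
        simp only [Finset.mem_filter, Finset.mem_Icc] at hm
        rw [show 2*(m/2-1)+2 = m by omega]
        rw [Odd.neg_one_pow (by rw [Nat.odd_iff]; omega), neg_one_mul]
    rw [hOdds, hEvens, Odd.neg_one_pow (show Odd (d+1) by rw [Nat.odd_iff]; omega)]
    linear_combination hkey
  · -- d odd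
    obtain ⟨r, hr⟩ := hdo
    have hd2 : d % 2 = 1 := by omega
    have hn1 : (d+1)/2 = r+1 := by omega
    have hn2 : (d-1)/2 = r := by omega
    have hkey := hz _ (hodd ⟨r, hr⟩ a)
    rw [Polynomial.coeff_sub, sub_eq_zero] at hkey
    have hL : (∏ i ∈ range ((d+1)/2), u (a (2*i+1) * a (2*i+2))).coeff 1
        = ∑ j ∈ range (r+1), P (2*j+1) := by
      rw [hn1]
      simp only [hu]
      rw [coeff1_prod]
      apply Finset.sum_congr rfl
      intro m hm
      simp only [Finset.mem_range] at hm
      rw [Finset.range_eq_Ico, pair_prod a 0 m, pair_prod a (m+1) (r+1)]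
      simp only [hP]
      have e1 : 2*m+1-1 = 2*m := by omega
      have e2 : 2*m+1+1 = 2*m+2 := by omega
      have e3 : 2*m+1+2 = 2*m+3 := by omega
      simp only [e1, e2, e3]
      norm_num [show 2*(r+1) = d+1 by omega, show 2*(m+1)+1 = 2*m+3 by ring]
    have hQ0 : (∏ i ∈ range ((d-1)/2), u (a (2*i+2) * a (2*i+3))).coeff 0
        = ∏ j ∈ Icc 2 d, a j := by
      rw [hn2, coeff0_prod]
      simp only [hc0]
      rw [Finset.range_eq_Ico, pair_prod' a 0 r]
      norm_num [show 2*r+1 = d by omega]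
    have hQ1 : (∏ i ∈ range ((d-1)/2), u (a (2*i+2) * a (2*i+3))).coeff 1
        = ∑ j ∈ range r, (∏ m ∈ Icc 2 (2*j+1), a m) * u₁ (a (2*j+2) * a (2*j+3))
            * ∏ m ∈ Icc (2*j+4) d, a m := by
      rw [hn2]
      simp only [hu]
      rw [coeff1_prod]
      apply Finset.sum_congr rfl
      intro m hm
      simp only [Finset.mem_range] at hm
      rw [Finset.range_eq_Ico, pair_prod' a 0 m, pair_prod' a (m+1) r]
      norm_num [show 2*r+1 = d by omega, show 2*(m+1)+2 = 2*m+4 by ring]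
    have hR : (u (a 1) * (∏ i ∈ range ((d-1)/2), u (a (2*i+2) * a (2*i+3)))
          * u (a (d+1))).coeff 1
        = u₁ (a 1) * ∏ j ∈ Icc 2 (d+1), a j
          + (∑ j ∈ range r, P (2*j+2) + (∏ j ∈ Icc 1 d, a j) * u₁ (a (d+1))) := by
      rw [coeff1_mul, coeff1_mul, Polynomial.mul_coeff_zero, hc0, hc0, hc1, hc1, hQ0, hQ1]
      have hsum : (a 1 * ∑ j ∈ range r, (∏ m ∈ Icc 2 (2*j+1), a m)
            * u₁ (a (2*j+2) * a (2*j+3)) * ∏ m ∈ Icc (2*j+4) d, a m) * a (d+1)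
          = ∑ j ∈ range r, P (2*j+2) := by
        rw [Finset.mul_sum, Finset.sum_mul]
        apply Finset.sum_congr rfl
        intro m hm
        simp only [Finset.mem_range] at hm
        simp only [hP]
        have e1 : 2*m+2-1 = 2*m+1 := by omega
        have e2 : 2*m+2+1 = 2*m+3 := by omega
        have e3 : 2*m+2+2 = 2*m+4 := by omega
        simp only [e1, e2, e3]
        rw [Finset.prod_Icc_succ_top (show 2*m+4 ≤ d+1 by omega) a,
          ← prod_Icc_bot a 1 (2*m+1) (by omega)]
        ring
      have t1 : a 1 * ∏ j ∈ Icc 2 d, a j = ∏ j ∈ Icc 1 d, a j :=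
        prod_Icc_bot a 1 d hd
      have t2 : (∏ j ∈ Icc 2 d, a j) * a (d+1) = ∏ j ∈ Icc 2 (d+1), a j :=
        (Finset.prod_Icc_succ_top (by omega : 2 ≤ d + 1) a).symm
      rw [add_mul, hsum, t1]
      rw [mul_assoc (u₁ (a 1)), t2]
      ring
    rw [hL, hR] at hkey
    have hOdds : ∑ m ∈ (Icc 1 d).filter (fun m => m % 2 = 1), (-1:A)^(d+1-m) * P m
        = -∑ j ∈ range (r+1), P (2*j+1) := by
      rw [← Finset.sum_neg_distrib]
      apply Finset.sum_nbij' (fun m => m / 2) (fun j => 2*j+1)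
      · intro m hm; simp only [Finset.mem_filter, Finset.mem_Icc, Finset.mem_range] at hm ⊢; omega
      · intro j hj; simp only [Finset.mem_filter, Finset.mem_Icc, Finset.mem_range] at hj ⊢; omega
      · intro m hm; simp only [Finset.mem_filter, Finset.mem_Icc] at hm; omega
      · intro j hj; simp only [Finset.mem_range] at hj; omega
      · intro m hm
        simp only [Finset.mem_filter, Finset.mem_Icc] at hm
        rw [show 2*(m/2)+1 = m by omega]
        rw [Odd.neg_one_pow (by rw [Nat.odd_iff]; omega), neg_one_mul]
    have hEvens : ∑ m ∈ (Icc 1 d).filter (fun m => ¬ (m % 2 = 1)), (-1:A)^(d+1-m) * P m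
        = ∑ j ∈ range r, P (2*j+2) := by
      apply Finset.sum_nbij' (fun m => m / 2 - 1) (fun j => 2*j+2)
      · intro m hm; simp only [Finset.mem_filter, Finset.mem_Icc, Finset.mem_range] at hm ⊢; omega
      · intro j hj; simp only [Finset.mem_filter, Finset.mem_Icc, Finset.mem_range] at hj ⊢; omega
      · intro m hm; simp only [Finset.mem_filter, Finset.mem_Icc] at hm; omega
      · intro j hj; simp only [Finset.mem_range] at hj; omega
      · intro m hm
        simp only [Finset.mem_filter, Finset.mem_Icc] at hm
        rw [show 2*(m/2-1)+2 = m by omega]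
        rw [Even.neg_one_pow (by rw [Nat.even_iff]; omega), one_mul]
    rw [hOdds, hEvens, Even.neg_one_pow (show Even (d+1) by rw [Nat.even_iff]; omega)]
    linear_combination -hkey
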